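/- (Faithful lift, Case 2: rank formula.) Let k ≥ 1, α : Fin k → ℤ, and let J ⊆ Fin k be nonempty with α_j < 0 for all j ∈ J. Let a := max { α_j : j ∈ J }. Define α' : Option (Fin k) → ℤ by α'(none) = a, α'(some j) = α_j − a for j ∈ J, and α'(some j) = α_j for j ∉ J. Then, writing N(β) for the number of indices where a vector β is negative, N(α') = N(α) + 1 − |{ j ∈ J : α_j = a }|. -/
import Mathlib


/-- Faithful lift, Case 2 (rank formula): if all entries of `α` on `J` are negative and
`a` is their maximum, then the number of negative entries of the faithful lift `α'`
equals `N(α) + 1 − |{j ∈ J : α j = a}|`. -/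
theorem faithful_lift_case_two_rank (k : ℕ) (hk : 1 ≤ k) (α : Fin k → ℤ)
    (J : Finset (Fin k)) (hJ : J.Nonempty)
    (hneg : ∀ j ∈ J, α j < 0)
    (a : ℤ) (ha : a = (J.image α).max' (hJ.image α))
    (α' : Option (Fin k) → ℤ)
    (h0 : α' none = a)
    (h1 : ∀ j ∈ J, α' (some j) = α j - a)
    (h2 : ∀ j ∉ J, α' (some j) = α j) :
    ((Finset.univ.filter (fun o : Option (Fin k) => α' o < 0)).card : ℤ) =
      ((Finset.univ.filter (fun j : Fin k => α j < 0)).card : ℤ) + 1 -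
        ((J.filter (fun j => α j = a)).card : ℤ) := by
  have hmem : a ∈ J.image α := by rw [ha]; exact (J.image α).max'_mem _
  obtain ⟨j₀, hj₀J, hj₀⟩ := Finset.mem_image.mp hmem
  have haneg : a < 0 := hj₀ ▸ hneg j₀ hj₀J
  have hle : ∀ j ∈ J, α j ≤ a := fun j hj => by
    rw [ha]; exact (J.image α).le_max' _ (Finset.mem_image_of_mem α hj)
  have hsub : J.filter (fun j => α j = a) ⊆
      Finset.univ.filter (fun j : Fin k => α j < 0) := by
    intro j hj
    rw [Finset.mem_filter] at hj ⊢
    exact ⟨Finset.mem_univ j, hneg j hj.1⟩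
  have key : (Finset.univ.filter (fun j : Fin k => α' (some j) < 0)) =
      (Finset.univ.filter (fun j : Fin k => α j < 0)) \ (J.filter (fun j => α j = a)) := by
    ext j
    simp only [Finset.mem_filter, Finset.mem_sdiff, Finset.mem_univ, true_and, not_and]
    by_cases hj : j ∈ J
    · rw [h1 j hj]
      have h3 := hneg j hj
      have h4 := hle j hj
      constructor
      · intro h5
        exact ⟨h3, fun _ h6 => by omega⟩
      · intro ⟨_, h6⟩
        have : α j ≠ a := fun h => h6 hj h
        omega
    · rw [h2 j hj]
      exact ⟨fun h => ⟨h, fun h' => absurd h' hj⟩, fun h => h.1⟩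
  have hcard : (Finset.univ.filter (fun j : Fin k => α' (some j) < 0)).card =
      (Finset.univ.filter (fun j : Fin k => α j < 0)).card -
        (J.filter (fun j => α j = a)).card := by
    rw [key, Finset.card_sdiff_of_subset hsub]
  have hmain : (Finset.univ.filter (fun o : Option (Fin k) => α' o < 0)).card =
      1 + (Finset.univ.filter (fun j : Fin k => α' (some j) < 0)).card := by
    rw [Finset.card_filter, Fintype.sum_option, h0, if_pos haneg, ← Finset.card_filter]
  have hcle := Finset.card_le_card hsub
  rw [hmain, hcard]
  push_cast [Nat.cast_sub hcle]
  ring
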